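/- Let Q be a quaternion division algebra over F and P(x) ∈ Q[x] a monic polynomial of even degree n. If P(x) has exactly n/2 distinct conjugacy classes of spherical roots, then all coefficients of P(x) lie in F. -/

import Mathlib

open Polynomial

section AuxLemmas

variable {F Q : Type*} [Field F] [DivisionRing Q] [Algebra F Q]

/-- Polynomials with central coefficients commute with everything. -/
lemma map_comm_poly' (u : F[X]) (W : Q[X]) :
    u.map (algebraMap F Q) * W = W * u.map (algebraMap F Q) := by
  induction u using Polynomial.induction_on' with
  | add p q hp hq => rw [Polynomial.map_add, add_mul, mul_add, hp, hq]
  | monomial m b =>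
    rw [Polynomial.map_monomial, ← Polynomial.C_mul_X_pow_eq_monomial]
    have h1 : Commute (C (algebraMap F Q b)) W := by
      unfold Commute SemiconjBy
      ext k
      simp [coeff_C_mul, coeff_mul_C, Algebra.commutes]
    have h2 : Commute ((X : Q[X]) ^ m) W := (Polynomial.commute_X W).pow_left m
    exact (h1.mul_left h2).symm.eq.symm

lemma eval_mul_map' (S : Q[X]) (u : F[X]) (x : Q) :
    (S * u.map (algebraMap F Q)).eval x
      = S.eval x * (u.map (algebraMap F Q)).eval x := by
  have := Polynomial.eval₂_mul_noncomm (RingHom.id Q) x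
      (p := S) (q := u.map (algebraMap F Q)) ?_
  · exact this
  · intro k
    simp only [RingHom.id_apply, Polynomial.coeff_map]
    exact (Algebra.commutes _ _)

lemma commute_q_lin (c d : F) (q : Q) :
    Commute q (algebraMap F Q c + algebraMap F Q d * q) := by
  have h1 : Commute q (algebraMap F Q c) := (Algebra.commutes c q).symm
  have h2 : Commute q (algebraMap F Q d) := (Algebra.commutes d q).symm
  exact h1.add_right (h2.mul_right (Commute.refl q))

lemma noncentral_aux {q : Q} (hq : ¬∃ r : F, q = algebraMap F Q r)
    {x y : F} (h : algebraMap F Q x * q + algebraMap F Q y = 0) : x = 0 ∧ y = 0 := by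
  have hinj := (algebraMap F Q).injective
  by_cases hx : x = 0
  · subst hx
    simp only [map_zero, zero_mul, zero_add] at h
    exact ⟨rfl, hinj (by simpa using h)⟩
  · exfalso
    apply hq
    have hx' : algebraMap F Q x ≠ 0 := fun h0 => hx (hinj (by simpa using h0))
    have h' : algebraMap F Q x * q = algebraMap F Q (-y) := by
      rw [map_neg]; exact eq_neg_of_add_eq_zero_left h
    refine ⟨x⁻¹ * (-y), ?_⟩
    calc q = (algebraMap F Q x)⁻¹ * (algebraMap F Q x * q) := by
              rw [← mul_assoc, inv_mul_cancel₀ hx', one_mul]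
    _ = (algebraMap F Q x)⁻¹ * algebraMap F Q (-y) := by rw [h']
    _ = algebraMap F Q (x⁻¹ * -y) := by rw [map_mul, map_inv₀]

/-- Every non-central element of a 4-dimensional central division algebra satisfies a
quadratic relation with central coefficients. -/
lemma quad [FiniteDimensional F Q] (hdim : Module.finrank F Q = 4)
    (hcent : ∀ z : Q, (∀ w : Q, z * w = w * z) → ∃ r : F, z = algebraMap F Q r)
    {q : Q} (hq : ¬∃ r : F, q = algebraMap F Q r) :
    ∃ t n : F, q ^ 2 = algebraMap F Q t * q + algebraMap F Q n := by
  obtain ⟨w, hw⟩ : ∃ w : Q, q * w ≠ w * q := by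
    by_contra h
    push_neg at h
    exact hq (hcent q h)
  have li : LinearIndependent F ![1, q, w, q * w] := by
    rw [Fintype.linearIndependent_iff]
    intro g hg
    have hsum : algebraMap F Q (g 0) + algebraMap F Q (g 1) * q
        + (algebraMap F Q (g 2) + algebraMap F Q (g 3) * q) * w = 0 := by
      rw [← hg, Fin.sum_univ_four]
      simp only [Matrix.cons_val_zero, Matrix.cons_val_one, Matrix.head_cons,
        Matrix.cons_val_two, Matrix.tail_cons, Matrix.cons_val_three]
      simp only [Algebra.smul_def, mul_one, add_mul, mul_assoc, add_assoc]
    set u : Q := algebraMap F Q (g 2) + algebraMap F Q (g 3) * q with hu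
    by_cases hu0 : u = 0
    · have h32 := noncentral_aux hq (x := g 3) (y := g 2) (by rw [add_comm]; exact hu0)
      rw [hu0, zero_mul, add_zero] at hsum
      have h10 := noncentral_aux hq (x := g 1) (y := g 0) (by rw [add_comm]; exact hsum)
      intro i
      fin_cases i <;> simp [h32.1, h32.2, h10.1, h10.2]
    · exfalso
      apply hw
      have hqu : Commute q u := commute_q_lin _ _ q
      have hw' : w = u⁻¹ * (-(algebraMap F Q (g 0) + algebraMap F Q (g 1) * q)) := by
        rw [← eq_neg_of_add_eq_zero_right hsum, ← mul_assoc, inv_mul_cancel₀ hu0, one_mul]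
      have : Commute q w := by
        rw [hw']
        exact (hqu.inv_right₀).mul_right (commute_q_lin (g 0) (g 1) q).neg_right
      exact this
  have hcard : Fintype.card (Fin 4) = Module.finrank F Q := by simp [hdim]
  let b := basisOfLinearIndependentOfCardEqFinrank li hcard
  have hb : ∀ i, b i = ![1, q, w, q * w] i := fun i => by
    rw [coe_basisOfLinearIndependentOfCardEqFinrank]
  obtain ⟨g, hsum⟩ : ∃ g : Fin 4 → F, q ^ 2 = algebraMap F Q (g 0) + algebraMap F Q (g 1) * q
      + (algebraMap F Q (g 2) + algebraMap F Q (g 3) * q) * w := by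
    refine ⟨fun i => b.repr (q ^ 2) i, ?_⟩
    conv_lhs => rw [← b.sum_repr (q ^ 2)]
    rw [Fin.sum_univ_four]
    simp only [hb]
    simp only [Matrix.cons_val_zero, Matrix.cons_val_one, Matrix.head_cons,
      Matrix.cons_val_two, Matrix.tail_cons, Matrix.cons_val_three]
    simp only [Algebra.smul_def, mul_one, add_mul, mul_assoc, add_assoc]
  set u : Q := algebraMap F Q (g 2) + algebraMap F Q (g 3) * q with hu
  set v : Q := algebraMap F Q (g 0) + algebraMap F Q (g 1) * q with hv
  have hqu : Commute q u := commute_q_lin _ _ q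
  have hqv : Commute q v := commute_q_lin _ _ q
  have hu0 : u = 0 := by
    by_contra hu0
    apply hw
    have h1 : q * q ^ 2 = q * v + u * (q * w) := by
      rw [hsum, mul_add, ← mul_assoc q u w, (hqu : q * u = u * q), mul_assoc]
    have h2 : q ^ 2 * q = v * q + u * (w * q) := by
      rw [hsum, add_mul, mul_assoc]
    have h3 : q * q ^ 2 = q ^ 2 * q := by
      rw [pow_two, mul_assoc]
    rw [h1, h2, (hqv : q * v = v * q)] at h3
    exact mul_left_cancel₀ hu0 (add_left_cancel h3)
  refine ⟨g 1, g 0, ?_⟩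
  rw [hsum, hu0, zero_mul, add_zero, add_comm]

/-- Two non-central elements satisfying the same quadratic relation are conjugate. -/
lemma dickson (hcent : ∀ z : Q, (∀ w : Q, z * w = w * z) → ∃ r : F, z = algebraMap F Q r)
    {a b : Q} (hb : ¬∃ r : F, b = algebraMap F Q r)
    {t n : F} (ha2 : a ^ 2 = algebraMap F Q t * a + algebraMap F Q n)
    (hb2 : b ^ 2 = algebraMap F Q t * b + algebraMap F Q n) :
    ∃ g : Q, g ≠ 0 ∧ b = g * a * g⁻¹ := by
  set T : Q := algebraMap F Q t with hT
  set N : Q := algebraMap F Q n with hN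
  have hTc : ∀ x : Q, T * x = x * T := fun x => Algebra.commutes t x
  have hNc : ∀ x : Q, N * x = x * N := fun x => Algebra.commutes n x
  by_cases hx : ∃ z : Q, b * z - T * z + z * a ≠ 0
  · obtain ⟨z, hz⟩ := hx
    set x : Q := b * z - T * z + z * a with hxdef
    have key : b * x = x * a := by
      have e1 : b * x = N * z + b * (z * a) := by
        have hbb : b * b = T * b + N := by rw [← pow_two]; exact hb2
        calc b * x = b * (b * z) - b * (T * z) + b * (z * a) := by
              rw [hxdef, mul_add, mul_sub]
        _ = (T * b + N) * z - T * (b * z) + b * (z * a) := by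
              rw [← mul_assoc, hbb, ← mul_assoc, ← hTc b, mul_assoc]
        _ = N * z + b * (z * a) := by rw [add_mul, mul_assoc]; abel
      have e2 : x * a = N * z + b * (z * a) := by
        have haa : a * a = T * a + N := by rw [← pow_two]; exact ha2
        calc x * a = b * z * a - T * z * a + z * (a * a) := by
              rw [hxdef, add_mul, sub_mul, mul_assoc z a a]
        _ = b * z * a - T * z * a + (T * z * a + z * N) := by
              rw [haa, mul_add, ← mul_assoc, ← hTc z]
        _ = N * z + b * (z * a) := by rw [← hNc z, mul_assoc]; abel
      rw [e1, e2]
    refine ⟨x, hz, ?_⟩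
    rw [← key, mul_assoc, mul_inv_cancel₀ hz, mul_one]
  · push_neg at hx
    exfalso
    apply hb
    apply hcent
    intro z
    have h1 := hx 1
    have h2 := hx z
    -- from h1 : b - T + a = 0, so b = T - a
    have hb' : b = T - a := by
      rw [mul_one, mul_one, one_mul] at h1
      have h3 : b - (T - a) = 0 := by rw [← h1]; abel
      exact sub_eq_zero.mp h3
    have hbz : b * z = -(z * a) + T * z :=
      sub_eq_iff_eq_add.mp (eq_neg_of_add_eq_zero_left h2)
    rw [hbz, hb', mul_sub, ← hTc z, neg_add_eq_sub]

lemma conj_sq {q g : Q} (hg : g ≠ 0) {t n : F}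
    (h2 : q * q = algebraMap F Q t * q + algebraMap F Q n) :
    (g * q * g⁻¹) * (g * q * g⁻¹)
      = algebraMap F Q t * (g * q * g⁻¹) + algebraMap F Q n := by
  set b := g * q * g⁻¹ with hbdef
  have hbg : b * g = g * q := by
    rw [hbdef, mul_assoc (g * q) g⁻¹ g, inv_mul_cancel₀ hg, mul_one]
  apply mul_right_cancel₀ hg
  calc (b * b) * g = b * (g * q) := by rw [mul_assoc, hbg]
  _ = (g * q) * q := by rw [← mul_assoc, hbg]
  _ = g * (algebraMap F Q t * q + algebraMap F Q n) := by rw [mul_assoc, h2]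
  _ = algebraMap F Q t * (g * q) + algebraMap F Q n * g := by
      rw [mul_add, ← mul_assoc, ← Algebra.commutes t g, mul_assoc,
        ← Algebra.commutes n g]
  _ = (algebraMap F Q t * b + algebraMap F Q n) * g := by
      rw [add_mul, mul_assoc, hbg]

/-- The quadratic polynomial attached to a spherical root divides `P`. -/
lemma div_quad (hcent : ∀ z : Q, (∀ w : Q, z * w = w * z) → ∃ r : F, z = algebraMap F Q r)
    {q : Q} (hq : ¬∃ r : F, q = algebraMap F Q r) {t n : F}
    (h2 : q ^ 2 = algebraMap F Q t * q + algebraMap F Q n) {P : Q[X]}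
    (hP : ∀ g : Q, g ≠ 0 → P.eval (g * q * g⁻¹) = 0) :
    ∃ S : Q[X], P = ((X ^ 2 - C t * X - C n : F[X]).map (algebraMap F Q)) * S := by
  have hmon₀' : (X ^ 2 - C t * X - C n : F[X]).Monic := by monicity!
  have hdeg₀' : (X ^ 2 - C t * X - C n : F[X]).degree = 2 := by compute_degree!
  set c₀ : F[X] := X ^ 2 - C t * X - C n with hc₀
  have hmon₀ : c₀.Monic := hmon₀'
  have hdeg₀ : c₀.degree = 2 := hdeg₀'
  set c : Q[X] := c₀.map (algebraMap F Q) with hc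
  have hmonc : c.Monic := hmon₀.map _
  have hdegc : c.degree = 2 := by
    rw [hc, degree_map_eq_of_injective (algebraMap F Q).injective, hdeg₀]
  set D := P /ₘ c with hD
  set R := P %ₘ c with hRdef
  have hPeq : R + c * D = P := modByMonic_add_div P c
  have hcval : ∀ g : Q, g ≠ 0 → c.eval (g * q * g⁻¹) = 0 := by
    intro g hg
    have hb := conj_sq hg (by rw [← pow_two q]; exact h2)
    have hev : c.eval (g * q * g⁻¹) = (g * q * g⁻¹) * (g * q * g⁻¹)
        - algebraMap F Q t * (g * q * g⁻¹) - algebraMap F Q n := by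
      rw [hc, hc₀]
      rw [show ((X : F[X]) ^ 2) = X * X from pow_two X]
      simp [Polynomial.map_sub, Polynomial.map_mul, eval_sub, eval_mul_X, eval_X,
        eval_C_mul, eval_C]
    rw [hev, hb]
    abel
  have hRval : ∀ g : Q, g ≠ 0 → R.eval (g * q * g⁻¹) = 0 := by
    intro g hg
    have h1 : P.eval (g * q * g⁻¹)
        = R.eval (g * q * g⁻¹) + (D * c).eval (g * q * g⁻¹) := by
      conv_lhs => rw [← hPeq, map_comm_poly' c₀ D]
      rw [eval_add]
    rw [hc] at h1
    rw [eval_mul_map' D c₀ _, ← hc, hcval g hg, mul_zero, add_zero, hP g hg] at h1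
    exact h1.symm
  have hdegR : R.degree ≤ 1 := by
    have hlt := degree_modByMonic_lt P hmonc
    rw [hdegc] at hlt
    rcases eq_or_ne R 0 with h | h
    · simp [h]
    · rw [degree_eq_natDegree h] at hlt ⊢
      exact_mod_cast Nat.lt_succ_iff.mp (by exact_mod_cast hlt)
  have hform := eq_X_add_C_of_degree_le_one hdegR
  have hlin : ∀ g : Q, g ≠ 0 → R.coeff 1 * (g * q * g⁻¹) + R.coeff 0 = 0 := by
    intro g hg
    have hv := hRval g hg
    rw [hform] at hv
    simpa [eval_add, eval_C_mul, eval_X, eval_C] using hv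
  have hr1 : R.coeff 1 = 0 := by
    by_contra hr1
    apply hq
    apply hcent
    intro w
    by_cases hw : w = 0
    · simp [hw]
    have e1 := hlin w hw
    have e2 := hlin 1 one_ne_zero
    rw [one_mul, inv_one, mul_one] at e2
    have e3 : R.coeff 1 * (w * q * w⁻¹) = R.coeff 1 * q :=
      add_right_cancel (e1.trans e2.symm)
    have e4 : w * q * w⁻¹ = q := mul_left_cancel₀ hr1 e3
    have e5 : (w * q * w⁻¹) * w = q * w := by rw [e4]
    rw [mul_assoc (w * q) w⁻¹ w, inv_mul_cancel₀ hw, mul_one] at e5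
    exact e5.symm
  have hr0 : R.coeff 0 = 0 := by
    have e2 := hlin 1 one_ne_zero
    rw [one_mul, inv_one, mul_one, hr1, zero_mul, zero_add] at e2
    exact e2
  have hR0 : R = 0 := by rw [hform, hr1, hr0]; simp
  exact ⟨D, by rw [← hPeq, hR0, zero_add, hc]⟩

/-- The quadratic polynomial attached to a non-central element is irreducible over `F`. -/
lemma irred_quad {q : Q} (hq : ¬∃ r : F, q = algebraMap F Q r) {t n : F}
    (h2 : q ^ 2 = algebraMap F Q t * q + algebraMap F Q n) :
    Irreducible (X ^ 2 - C t * X - C n : F[X]) := by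
  have hmon₀ : (X ^ 2 - C t * X - C n : F[X]).Monic := by monicity!
  have hdeg₀ : (X ^ 2 - C t * X - C n : F[X]).degree = 2 := by compute_degree!
  constructor
  · intro hu
    have := degree_eq_zero_of_isUnit hu
    rw [hdeg₀] at this
    exact (by norm_num : (2 : WithBot ℕ) ≠ 0) this
  · intro u v huv
    by_contra hcon
    push_neg at hcon
    obtain ⟨hu, hv⟩ := hcon
    have hnd : (X ^ 2 - C t * X - C n : F[X]).natDegree = 2 :=
      natDegree_eq_of_degree_eq_some hdeg₀
    have hne : (X ^ 2 - C t * X - C n : F[X]) ≠ 0 := hmon₀.ne_zero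
    have hu0 : u ≠ 0 := fun h => hne (by rw [huv, h, zero_mul])
    have hv0 : v ≠ 0 := fun h => hne (by rw [huv, h, mul_zero])
    have hsum : u.natDegree + v.natDegree = 2 := by
      rw [← natDegree_mul hu0 hv0, ← huv, hnd]
    have hu1 : u.natDegree = 1 := by
      rcases Nat.lt_or_ge u.natDegree 1 with h | h
      · exfalso
        exact hu (isUnit_iff_degree_eq_zero.mpr
          (by rw [degree_eq_natDegree hu0]; exact_mod_cast Nat.lt_one_iff.mp h))
      rcases Nat.lt_or_ge v.natDegree 1 with h' | h'
      · exfalso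
        exact hv (isUnit_iff_degree_eq_zero.mpr
          (by rw [degree_eq_natDegree hv0]; exact_mod_cast Nat.lt_one_iff.mp h'))
      omega
    -- u is linear, so the quadratic has a root α in F
    have hc1 : u.coeff 1 ≠ 0 := by
      have hlc : u.leadingCoeff ≠ 0 := leadingCoeff_ne_zero.mpr hu0
      rwa [Polynomial.leadingCoeff, hu1] at hlc
    set α : F := -(u.coeff 0) / (u.coeff 1) with hα
    have hformu : u = C (u.coeff 1) * X + C (u.coeff 0) :=
      eq_X_add_C_of_degree_le_one (by rw [degree_eq_natDegree hu0, hu1]; exact le_refl _)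
    have heval : u.eval α = 0 := by
      conv_lhs => rw [hformu]
      simp only [eval_add, eval_mul, eval_C, eval_X]
      rw [hα]
      field_simp
      ring
    have hα0 : (X ^ 2 - C t * X - C n : F[X]).eval α = 0 := by
      rw [huv, eval_mul, heval, zero_mul]
    have hα2 : α * α = t * α + n := by
      simp only [eval_sub, eval_pow, eval_mul, eval_C, eval_X] at hα0
      linear_combination hα0
    set x : Q := algebraMap F Q α with hx
    set T : Q := algebraMap F Q t with hT
    set N : Q := algebraMap F Q n with hN
    have hxx : x * x = T * x + N := by
      rw [hx, hT, hN, ← map_mul, hα2, map_add, map_mul]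
    have hqq : q * q = T * q + N := by rw [← pow_two]; exact h2
    have key : (q - x) * (q + x - T) = 0 := by
      have e : (q - x) * (q + x - T)
          = (q * q + q * x - q * T) - (x * q + x * x - x * T) := by
        rw [sub_mul, mul_sub, mul_add, mul_sub, mul_add]
      rw [e, hqq, hxx, ← Algebra.commutes α q, ← Algebra.commutes t q,
        ← Algebra.commutes t (algebraMap F Q α)]
      abel
    rcases mul_eq_zero.mp key with h | h
    · exact hq ⟨α, sub_eq_zero.mp h⟩
    · apply hq
      have h' : q + x = T := sub_eq_zero.mp h
      exact ⟨t - α, by rw [map_sub]; exact eq_sub_of_add_eq h'⟩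

end AuxLemmas

/-- `q` is a spherical root of `P`: `q` is non-central (not in `F`) and every conjugate
of `q` is a right root of `P`. -/
def IsSphericalRoot (F : Type*) {Q : Type*} [Field F] [DivisionRing Q] [Algebra F Q]
    (P : Q[X]) (q : Q) : Prop :=
  (¬∃ r : F, q = algebraMap F Q r) ∧ ∀ g : Q, g ≠ 0 → P.eval (g * q * g⁻¹) = 0

/-- If a monic polynomial of even degree `n` over a quaternion division algebra has
exactly `n/2` distinct conjugacy classes of spherical roots, then all its coefficients
lie in the center `F`. -/
theorem stmt15 {F Q : Type*} [Field F] [DivisionRing Q] [Algebra F Q]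
    [FiniteDimensional F Q] (hdim : Module.finrank F Q = 4)
    (hcent : ∀ z : Q, (∀ w : Q, z * w = w * z) → ∃ r : F, z = algebraMap F Q r)
    (P : Q[X]) (hmonic : P.Monic) (heven : Even P.natDegree)
    (a : Fin (P.natDegree / 2) → Q)
    (hsph : ∀ i, IsSphericalRoot F P (a i))
    (hpair : ∀ i j, i ≠ j → ¬∃ q : Q, q ≠ 0 ∧ a j = q * a i * q⁻¹) :
    ∀ k : ℕ, ∃ r : F, P.coeff k = algebraMap F Q r := by
  classical
  choose t n hquad using fun i => quad hdim hcent (hsph i).1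
  set c₀ : Fin (P.natDegree / 2) → F[X] :=
    fun i => X ^ 2 - C (t i) * X - C (n i) with hc₀def
  have hmon : ∀ i, (c₀ i).Monic := by
    intro i
    have : (X ^ 2 - C (t i) * X - C (n i) : F[X]).Monic := by monicity!
    simpa [hc₀def] using this
  have hdeg : ∀ i, (c₀ i).natDegree = 2 := by
    intro i
    have : (X ^ 2 - C (t i) * X - C (n i) : F[X]).degree = 2 := by compute_degree!
    simpa [hc₀def] using natDegree_eq_of_degree_eq_some this
  have hirr : ∀ i, Irreducible (c₀ i) := by
    intro i
    simpa [hc₀def] using irred_quad (hsph i).1 (hquad i)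
  have hdvd : ∀ i, ∃ S, P = (c₀ i).map (algebraMap F Q) * S := by
    intro i
    simpa [hc₀def] using div_quad hcent (hsph i).1 (hquad i) (hsph i).2
  have hcoeff1 : ∀ i, (c₀ i).coeff 1 = -(t i) := by
    intro i
    simp [hc₀def, coeff_X_pow, coeff_C]
  have hcoeff0 : ∀ i, (c₀ i).coeff 0 = -(n i) := by
    intro i
    simp [hc₀def, coeff_X_pow, coeff_C]
  have hcop : ∀ i j, i ≠ j → IsCoprime (c₀ i) (c₀ j) := by
    intro i j hij
    rw [(hirr i).coprime_iff_not_dvd]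
    intro hdvd'
    obtain ⟨e, he⟩ := hdvd'
    have he0 : e ≠ 0 := by
      rintro rfl
      rw [mul_zero] at he
      exact (hmon j).ne_zero he
    have hdege : e.natDegree = 0 := by
      have hnd := natDegree_mul ((hmon i).ne_zero) he0
      rw [← he, hdeg i, hdeg j] at hnd
      omega
    have he1 : e = 1 := by
      have hlc : (c₀ j).leadingCoeff = (c₀ i).leadingCoeff * e.leadingCoeff := by
        rw [he, leadingCoeff_mul]
      rw [(hmon j).leadingCoeff, (hmon i).leadingCoeff, one_mul] at hlc
      rw [eq_C_of_natDegree_eq_zero hdege] at hlc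
      rw [leadingCoeff_C] at hlc
      rw [eq_C_of_natDegree_eq_zero hdege, ← hlc, map_one]
    have hceq : c₀ i = c₀ j := by rw [he, he1, mul_one]
    have ht : t i = t j := by
      have h1 := congrArg (fun p => Polynomial.coeff p 1) hceq
      simp only [hcoeff1] at h1
      exact neg_inj.mp h1
    have hn : n i = n j := by
      have h0 := congrArg (fun p => Polynomial.coeff p 0) hceq
      simp only [hcoeff0] at h0
      exact neg_inj.mp h0
    have hq2 : a j ^ 2 = algebraMap F Q (t i) * a j + algebraMap F Q (n i) := by
      rw [ht, hn]
      exact hquad j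
    obtain ⟨g, hg0, hg⟩ := dickson hcent (hsph j).1 (hquad i) hq2
    exact hpair i j hij ⟨g, hg0, hg⟩
  have key : ∀ s : Finset (Fin (P.natDegree / 2)),
      ∃ S, P = ((∏ i ∈ s, c₀ i).map (algebraMap F Q)) * S := by
    intro s
    induction s using Finset.induction_on with
    | empty => exact ⟨P, by simp⟩
    | @insert j s hj ih =>
      obtain ⟨S, hS⟩ := ih
      obtain ⟨A, hA⟩ := hdvd j
      have hco : IsCoprime (c₀ j) (∏ i ∈ s, c₀ i) :=
        IsCoprime.prod_right fun i hi => hcop j i (by rintro rfl; exact hj hi)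
      obtain ⟨u, v, huv⟩ := hco
      have huv' : (u.map (algebraMap F Q)) * ((c₀ j).map (algebraMap F Q))
          + (v.map (algebraMap F Q)) * ((∏ i ∈ s, c₀ i).map (algebraMap F Q)) = 1 := by
        rw [← Polynomial.map_mul, ← Polynomial.map_mul, ← Polynomial.map_add, huv,
          Polynomial.map_one]
      refine ⟨S * u.map (algebraMap F Q) + (v.map (algebraMap F Q)) * A, ?_⟩
      rw [Finset.prod_insert hj, Polynomial.map_mul]
      set cj := (c₀ j).map (algebraMap F Q) with hcj
      set Pi := (∏ i ∈ s, c₀ i).map (algebraMap F Q) with hPi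
      set u' := u.map (algebraMap F Q) with hu'
      set v' := v.map (algebraMap F Q) with hv'
      calc P = 1 * P := (one_mul P).symm
      _ = (u' * cj + v' * Pi) * P := by rw [huv']
      _ = u' * (cj * P) + v' * (Pi * P) := by rw [add_mul, mul_assoc, mul_assoc]
      _ = u' * (cj * (Pi * S)) + v' * (Pi * (cj * A)) := by rw [← hS, ← hA]
      _ = cj * Pi * (S * u') + cj * Pi * (v' * A) := by
          congr 1
          · rw [hu', map_comm_poly' u (cj * (Pi * S)), mul_assoc cj (Pi * S),
              mul_assoc Pi S, ← mul_assoc cj Pi]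
          · rw [← mul_assoc v' Pi (cj * A), hv', map_comm_poly' v Pi, ← hv',
              mul_assoc Pi v' (cj * A), ← mul_assoc v' cj A, hv',
              map_comm_poly' v ((c₀ j).map (algebraMap F Q)), ← hcj, ← hv',
              mul_assoc cj v' A, ← mul_assoc Pi cj (v' * A),
              show Pi * cj = cj * Pi from (map_comm_poly' (c₀ j) Pi).symm]
      _ = cj * Pi * (S * u' + v' * A) := by rw [mul_add]
  obtain ⟨S, hS⟩ := key Finset.univ
  set M := ∏ i ∈ Finset.univ, c₀ i with hM
  have hMmon : M.Monic := monic_prod_of_monic _ _ (fun i _ => hmon i)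
  have hMdeg : M.natDegree = P.natDegree := by
    rw [hM, natDegree_prod _ _ (fun i _ => (hmon i).ne_zero)]
    have : ∀ i ∈ (Finset.univ : Finset (Fin (P.natDegree / 2))), (c₀ i).natDegree = 2 :=
      fun i _ => hdeg i
    rw [Finset.sum_congr rfl this, Finset.sum_const, Finset.card_univ, Fintype.card_fin,
      smul_eq_mul, Nat.div_mul_cancel heven.two_dvd]
  have hmapmon : (M.map (algebraMap F Q)).Monic := hMmon.map _
  have hmapdeg : (M.map (algebraMap F Q)).natDegree = P.natDegree := by
    rw [natDegree_map_eq_of_injective (algebraMap F Q).injective, hMdeg]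
  have hS0 : S ≠ 0 := by
    rintro rfl
    rw [mul_zero] at hS
    exact hmonic.ne_zero hS
  have hdegS : S.natDegree = 0 := by
    have hnd := hmapmon.natDegree_mul' hS0
    rw [← hS, hmapdeg] at hnd
    omega
  have hSC := eq_C_of_natDegree_eq_zero hdegS
  have hcoeffS : S.coeff 0 = 1 := by
    have h1 : (M.map (algebraMap F Q) * S).coeff P.natDegree = 1 := by
      rw [← hS]; exact hmonic.coeff_natDegree
    rw [hSC, coeff_mul_C, ← hmapdeg, hmapmon.coeff_natDegree, one_mul] at h1
    exact h1
  have hPM : P = M.map (algebraMap F Q) := by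
    rw [hS, hSC, hcoeffS, map_one, mul_one]
  intro k
  exact ⟨M.coeff k, by rw [hPM, coeff_map]⟩
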